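/- arXiv:1211.0089 — 2 statements merged into one kernel-verified Lean document; each statement's English description precedes it below -/
import Mathlib

section
/- For all a, b > 0 with a ≠ b, G(a,b)^(1/3) · Q(a,b)^(2/3) < M(a,b), and the exponent 1/3 is the least value α such that G^α Q^(1-α) < M holds for all a ≠ b. -/
open Real

private lemma key_poly (x : ℝ) (h0 : 0 < x) (h1 : x < 1) :
    (1-x)^7 * (1+x)^5 < (1 - x/3)^6 := by
  have key : (1-x/3)^6 - (1-x)^7*(1+x)^5 = (x^2/729) *
      (4131*(1-x)^10 + 33480*x*(1-x)^9 + 111915*x^2*(1-x)^8 + 200322*x^3*(1-x)^7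
       + 213445*x^4*(1-x)^6 + 149100*x^5*(1-x)^5 + 75660*x^6*(1-x)^4
       + 27200*x^7*(1-x)^3 + 6576*x^8*(1-x)^2 + 960*x^9*(1-x) + 64*x^10) := by ring
  have hy : (0:ℝ) < 1 - x := by linarith
  have hpos : (0:ℝ) < (x^2/729) *
      (4131*(1-x)^10 + 33480*x*(1-x)^9 + 111915*x^2*(1-x)^8 + 200322*x^3*(1-x)^7
       + 213445*x^4*(1-x)^6 + 149100*x^5*(1-x)^5 + 75660*x^6*(1-x)^4
       + 27200*x^7*(1-x)^3 + 6576*x^8*(1-x)^2 + 960*x^9*(1-x) + 64*x^10) := by positivity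
  linarith

private lemma key_rpow (u : ℝ) (h0 : 0 < u) (h1 : u < 1) :
    (1-u^2) ^ ((7:ℝ)/6) * (1+u^2) ^ ((5:ℝ)/6) < 1 - u^2/3 := by
  have hx0 : 0 < u^2 := by positivity
  have hx1 : u^2 < 1 := by nlinarith
  have hp : (0:ℝ) < 1 - u^2 := by linarith
  have hq : (0:ℝ) < 1 + u^2 := by positivity
  have h6 : ((1-u^2) ^ ((7:ℝ)/6) * (1+u^2) ^ ((5:ℝ)/6))^6 = (1-u^2)^7 * (1+u^2)^5 := by
    rw [mul_pow, ← Real.rpow_natCast ((1-u^2) ^ ((7:ℝ)/6)) 6,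
      ← Real.rpow_natCast ((1+u^2) ^ ((5:ℝ)/6)) 6,
      ← Real.rpow_mul hp.le, ← Real.rpow_mul hq.le]
    norm_num
  have hlt : ((1-u^2) ^ ((7:ℝ)/6) * (1+u^2) ^ ((5:ℝ)/6))^6 < (1 - u^2/3)^6 := by
    rw [h6]; exact key_poly _ hx0 hx1
  exact lt_of_pow_lt_pow_left₀ 6 (by linarith : (0:ℝ) ≤ 1 - u^2/3) hlt

private noncomputable def gg (u : ℝ) : ℝ :=
  u * (1-u^2) ^ (-(1/6):ℝ) * (1+u^2) ^ (-(1/3):ℝ)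

private lemma hasDerivAt_gg (u : ℝ) (h1 : u^2 < 1) :
    HasDerivAt gg
      (((1:ℝ) * (1-u^2) ^ (-(1/6):ℝ) + u * ((-(1/6)) * (1-u^2) ^ ((-(1/6):ℝ)-1) * (-(2*u)))) * (1+u^2) ^ (-(1/3):ℝ)
       + (u * (1-u^2) ^ (-(1/6):ℝ)) * ((-(1/3)) * (1+u^2) ^ ((-(1/3):ℝ)-1) * (2*u))) u := by
  have hp : 1 - u^2 ≠ 0 := by nlinarith
  have hq : 1 + u^2 ≠ 0 := by positivity
  have hu1 : HasDerivAt (fun u:ℝ => 1 - u^2) (-(2*u)) u := by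
    simpa using ((hasDerivAt_pow 2 u).const_sub 1)
  have hu2 : HasDerivAt (fun u:ℝ => 1 + u^2) (2*u) u := by
    simpa using ((hasDerivAt_pow 2 u).const_add 1)
  have hA : HasDerivAt (fun u:ℝ => (1-u^2) ^ (-(1/6):ℝ))
      ((-(1/6)) * (1-u^2) ^ ((-(1/6):ℝ)-1) * (-(2*u))) u :=
    by have := (Real.hasDerivAt_rpow_const (x := 1 - u^2) (p := -(1/6)) (Or.inl hp)).comp u hu1; exact this
  have hB : HasDerivAt (fun u:ℝ => (1+u^2) ^ (-(1/3):ℝ))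
      ((-(1/3)) * (1+u^2) ^ ((-(1/3):ℝ)-1) * (2*u)) u :=
    by have := (Real.hasDerivAt_rpow_const (x := 1 + u^2) (p := -(1/3)) (Or.inl hq)).comp u hu2; exact this
  exact ((hasDerivAt_id u).mul hA).mul hB

private lemma deriv_gg_gt (u : ℝ) (h0 : 0 < u) (h1 : u < 1) :
    (Real.sqrt (1+u^2))⁻¹ <
      ((1:ℝ) * (1-u^2) ^ (-(1/6):ℝ) + u * ((-(1/6)) * (1-u^2) ^ ((-(1/6):ℝ)-1) * (-(2*u)))) * (1+u^2) ^ (-(1/3):ℝ)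
       + (u * (1-u^2) ^ (-(1/6):ℝ)) * ((-(1/3)) * (1+u^2) ^ ((-(1/3):ℝ)-1) * (2*u)) := by
  have key := key_rpow u h0 h1
  have hp : (0:ℝ) < 1 - u^2 := by nlinarith
  have hq : (0:ℝ) < 1 + u^2 := by positivity
  set p := 1 - u^2 with hpdef
  set q := 1 + u^2 with hqdef
  set P6 := p ^ ((1:ℝ)/6) with hP6
  set Q3 := q ^ ((1:ℝ)/3) with hQ3
  set Q2 := q ^ ((1:ℝ)/2) with hQ2
  have hP6p : 0 < P6 := Real.rpow_pos_of_pos hp _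
  have hQ3p : 0 < Q3 := Real.rpow_pos_of_pos hq _
  have hQ2p : 0 < Q2 := Real.rpow_pos_of_pos hq _
  have e1 : p ^ (-(1/6):ℝ) = P6⁻¹ := by
    rw [hP6]; exact Real.rpow_neg hp.le _
  have e2 : p ^ ((-(1/6):ℝ)-1) = (p*P6)⁻¹ := by
    rw [hP6, show ((-(1/6):ℝ)-1) = -(1 + 1/6) by norm_num, Real.rpow_neg hp.le,
      Real.rpow_add hp, Real.rpow_one]
  have e3 : q ^ (-(1/3):ℝ) = Q3⁻¹ := by
    rw [hQ3]; exact Real.rpow_neg hq.le _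
  have e4 : q ^ ((-(1/3):ℝ)-1) = (q*Q3)⁻¹ := by
    rw [hQ3, show ((-(1/3):ℝ)-1) = -(1 + 1/3) by norm_num, Real.rpow_neg hq.le,
      Real.rpow_add hq, Real.rpow_one]
  have esqrt : Real.sqrt q = Q2 := by rw [hQ2, Real.sqrt_eq_rpow]
  have eQ2sq : Q2 * Q2 = q := by
    rw [hQ2, ← Real.rpow_add hq]; norm_num
  have ekey : p * P6 * (Q3 * Q2) < 1 - u^2/3 := by
    have e5 : p ^ ((7:ℝ)/6) = p * P6 := by
      rw [hP6, show ((7:ℝ)/6) = 1 + 1/6 by norm_num, Real.rpow_add hp, Real.rpow_one]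
    have e6 : q ^ ((5:ℝ)/6) = Q3 * Q2 := by
      rw [hQ3, hQ2, ← Real.rpow_add hq]; norm_num
    rw [e5, e6] at key; linarith [key]
  rw [e1, e2, e3, e4, esqrt]
  have hD : ((1:ℝ) * P6⁻¹ + u * ((-(1/6)) * (p*P6)⁻¹ * (-(2*u)))) * Q3⁻¹
       + (u * P6⁻¹) * ((-(1/3)) * (q*Q3)⁻¹ * (2*u)) = (3 - u^2) / (3 * (p*P6) * (q*Q3)) := by
    field_simp
    ring_nf
    rw [hpdef, hqdef]; ring
  rw [hD, inv_eq_one_div, div_lt_div_iff₀ hQ2p (by positivity)]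
  have ekey2 : 3 * (p * P6 * (Q3 * Q2)) < 3 - u^2 := by nlinarith [ekey]
  calc 1 * (3 * (p*P6) * (q*Q3)) = 3 * (p * P6 * (Q3 * Q2)) * Q2 := by
        rw [← eQ2sq]; ring
    _ < (3 - u^2) * Q2 := mul_lt_mul_of_pos_right ekey2 hQ2p

private lemma arsinh_lt_gg (u : ℝ) (h0 : 0 < u) (h1 : u < 1) :
    Real.arsinh u < gg u := by
  set F : ℝ → ℝ := fun v => gg v - Real.arsinh v with hF
  have hder : ∀ x ∈ Set.Ico (0:ℝ) 1, HasDerivAt F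
      ((((1:ℝ) * (1-x^2) ^ (-(1/6):ℝ) + x * ((-(1/6)) * (1-x^2) ^ ((-(1/6):ℝ)-1) * (-(2*x)))) * (1+x^2) ^ (-(1/3):ℝ)
       + (x * (1-x^2) ^ (-(1/6):ℝ)) * ((-(1/3)) * (1+x^2) ^ ((-(1/3):ℝ)-1) * (2*x)))
       - (Real.sqrt (1+x^2))⁻¹) x := by
    intro x hx
    have hx2 : x^2 < 1 := by
      rcases hx with ⟨hx0, hx1⟩; nlinarith
    exact (hasDerivAt_gg x hx2).sub (Real.hasDerivAt_arsinh x)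
  have hmono : StrictMonoOn F (Set.Ico (0:ℝ) 1) := by
    apply strictMonoOn_of_deriv_pos (convex_Ico 0 1)
    · intro x hx
      exact (hder x hx).continuousAt.continuousWithinAt
    · intro x hx
      rw [interior_Ico] at hx
      rw [(hder x ⟨hx.1.le, hx.2⟩).deriv]
      have := deriv_gg_gt x hx.1 hx.2
      linarith
  have h01 : (0:ℝ) ∈ Set.Ico (0:ℝ) 1 := by constructor <;> norm_num
  have hu1 : u ∈ Set.Ico (0:ℝ) 1 := ⟨h0.le, h1⟩
  have := hmono h01 hu1 h0
  have hF0 : F 0 = 0 := by simp [hF, gg]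
  rw [hF0] at this
  simpa [hF, sub_pos] using this

-- key product inequality on (0,1)
private lemma key_main (u : ℝ) (h0 : 0 < u) (h1 : u < 1) :
    (1-u^2) ^ ((1:ℝ)/6) * (1+u^2) ^ ((1:ℝ)/3) * Real.arsinh u < u := by
  have hp : (0:ℝ) < 1 - u^2 := by nlinarith
  have hq : (0:ℝ) < 1 + u^2 := by positivity
  have hC : (0:ℝ) < (1-u^2) ^ ((1:ℝ)/6) * (1+u^2) ^ ((1:ℝ)/3) := by positivity
  have h := arsinh_lt_gg u h0 h1
  have := mul_lt_mul_of_pos_left h hC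
  calc (1-u^2) ^ ((1:ℝ)/6) * (1+u^2) ^ ((1:ℝ)/3) * Real.arsinh u
      < (1-u^2) ^ ((1:ℝ)/6) * (1+u^2) ^ ((1:ℝ)/3) * gg u := this
    _ = u := by
        rw [gg, show (-(1/6):ℝ) = -(1/6) from rfl]
        rw [Real.rpow_neg hp.le, Real.rpow_neg hq.le]
        field_simp

private lemma arsinh_ge (u : ℝ) (h0 : 0 ≤ u) (h1 : u ≤ 1) :
    u - u^3/6 ≤ Real.arsinh u := by
  set F : ℝ → ℝ := fun v => Real.arsinh v - (v - v^3/6) with hF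
  have hder : ∀ x : ℝ, HasDerivAt F ((Real.sqrt (1+x^2))⁻¹ - (1 - x^2/2)) x := by
    intro x
    have hpoly : HasDerivAt (fun v:ℝ => v - v^3/6) (1 - x^2/2) x := by
      have h3 := (hasDerivAt_pow 3 x).div_const 6
      have : HasDerivAt (fun v:ℝ => v - v^3/6) _ x := (hasDerivAt_id x).sub h3
      convert this using 1
      push_cast; ring
    exact (Real.hasDerivAt_arsinh x).sub hpoly
  have hmono : MonotoneOn F (Set.Icc (0:ℝ) 1) := by
    apply monotoneOn_of_deriv_nonneg (convex_Icc 0 1)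
    · exact fun x _ => (hder x).continuousAt.continuousWithinAt
    · exact fun x _ => ((hder x).differentiableAt).differentiableWithinAt
    · intro x hx
      rw [interior_Icc] at hx
      rw [(hder x).deriv]
      have hx0 := hx.1
      have hx1 := hx.2
      set s := Real.sqrt (1+x^2) with hs
      have hsp : 0 < s := Real.sqrt_pos.2 (by positivity)
      have hs2 : s^2 = 1 + x^2 := Real.sq_sqrt (by positivity)
      have hkey : (1 - x^2/2) * s ≤ 1 := by
        have ha2 : ((1-x^2/2)*s)^2 = (1-x^2/2)^2*(1+x^2) := by rw [mul_pow, hs2]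
        have hx2le : x^2 ≤ 1 := by nlinarith
        have h64 : x^6 ≤ x^4 := by
          nlinarith [mul_le_mul_of_nonneg_left hx2le (pow_nonneg hx0.le 4)]
        nlinarith [sq_nonneg ((1-x^2/2)*s - 1), ha2]
      have : (1 - x^2/2) ≤ s⁻¹ := by
        rw [inv_eq_one_div, le_div_iff₀ hsp]
        exact hkey
      linarith
  have h01 : (0:ℝ) ∈ Set.Icc (0:ℝ) 1 := by constructor <;> norm_num
  have hu : u ∈ Set.Icc (0:ℝ) 1 := ⟨h0, h1⟩
  have := hmono h01 hu h0
  have hF0 : F 0 = 0 := by simp [hF]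
  rw [hF0] at this
  simpa [hF, sub_nonneg] using this

-- log bounds
private lemma log_one_sub_ge (x : ℝ) (h0 : 0 ≤ x) (h1 : x ≤ 1/2) :
    -x - 2*x^2 ≤ Real.log (1-x) := by
  have hx : (0:ℝ) < 1 - x := by linarith
  refine (Real.le_log_iff_exp_le hx).2 ?_
  have h1e : 1 + (x + 2*x^2) ≤ Real.exp (x + 2*x^2) := by
    have := Real.add_one_le_exp (x + 2*x^2); linarith
  calc Real.exp (-x - 2*x^2) = (Real.exp (x+2*x^2))⁻¹ := by
        rw [show -x - 2*x^2 = -(x + 2*x^2) by ring, Real.exp_neg]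
    _ ≤ (1 + (x + 2*x^2))⁻¹ := by
        apply inv_anti₀ (by positivity) h1e
    _ ≤ 1 - x := by
        rw [inv_eq_one_div, div_le_iff₀ (by positivity)]
        nlinarith

private lemma log_one_add_ge (x : ℝ) (h0 : 0 ≤ x) (h1 : x ≤ 1/2) :
    x - x^2 ≤ Real.log (1+x) := by
  have hx : (0:ℝ) < 1 + x := by linarith
  refine (Real.le_log_iff_exp_le hx).2 ?_
  have hyp : (0:ℝ) < 1 - (x - x^2) := by nlinarith
  have h1e : 1 - (x - x^2) ≤ Real.exp (-(x - x^2)) := by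
    have := Real.add_one_le_exp (-(x - x^2)); linarith
  calc Real.exp (x - x^2) = (Real.exp (-(x-x^2)))⁻¹ := by
        rw [Real.exp_neg, inv_inv]
    _ ≤ (1 - (x - x^2))⁻¹ := by
        apply inv_anti₀ hyp h1e
    _ ≤ 1 + x := by
        rw [inv_eq_one_div, div_le_iff₀ hyp]
        nlinarith

noncomputable def M (a b : ℝ) : ℝ := (a - b) / (2 * Real.arsinh ((a - b) / (a + b)))
noncomputable def G (a b : ℝ) : ℝ := Real.sqrt (a * b)
noncomputable def Q (a b : ℝ) : ℝ := Real.sqrt ((a ^ 2 + b ^ 2) / 2)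

private lemma main_lt (a b : ℝ) (ha : 0 < a) (hb : 0 < b) (hba : b < a) :
    G a b ^ ((1 : ℝ) / 3) * Q a b ^ ((2 : ℝ) / 3) < M a b := by
  have hs : (0:ℝ) < a + b := by linarith
  set s := a + b with hsdef
  set t := (a - b)/s with htdef
  have ht0 : 0 < t := div_pos (by linarith) hs
  have ht1 : t < 1 := by rw [htdef, div_lt_one hs]; linarith
  have hp : (0:ℝ) < 1 - t^2 := by nlinarith
  have hq : (0:ℝ) < 1 + t^2 := by positivity
  have hA : 0 < Real.arsinh t := Real.arsinh_pos_iff.2 ht0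
  have hab : a * b = (s/2)^2 * (1 - t^2) := by
    rw [htdef, hsdef]; field_simp; ring
  have hab2 : (a^2 + b^2)/2 = (s/2)^2 * (1 + t^2) := by
    rw [htdef, hsdef]; field_simp; ring
  have eG : G a b = (s/2) * Real.sqrt (1 - t^2) := by
    rw [G, hab, Real.sqrt_mul (by positivity), Real.sqrt_sq (by positivity)]
  have eQ : Q a b = (s/2) * Real.sqrt (1 + t^2) := by
    rw [Q, hab2, Real.sqrt_mul (by positivity), Real.sqrt_sq (by positivity)]
  have eM : M a b = (s/2) * (t / Real.arsinh t) := by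
    rw [M, ← hsdef, ← htdef, show a - b = t * s by rw [htdef]; field_simp]
    field_simp
  rw [eG, eQ, eM]
  have L : ((s/2) * Real.sqrt (1-t^2)) ^ ((1:ℝ)/3) * ((s/2) * Real.sqrt (1+t^2)) ^ ((2:ℝ)/3)
      = (s/2) * ((1-t^2) ^ ((1:ℝ)/6) * (1+t^2) ^ ((1:ℝ)/3)) := by
    rw [Real.mul_rpow (by positivity) (Real.sqrt_nonneg _),
      Real.mul_rpow (by positivity) (Real.sqrt_nonneg _),
      Real.sqrt_eq_rpow (1-t^2), Real.sqrt_eq_rpow (1+t^2),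
      ← Real.rpow_mul hp.le, ← Real.rpow_mul hq.le]
    norm_num
    have hss : (s/2) ^ ((1:ℝ)/3) * (s/2) ^ ((2:ℝ)/3) = s/2 := by
      rw [← Real.rpow_add (by positivity : (0:ℝ) < s/2)]
      norm_num
    rw [mul_mul_mul_comm, hss]
  rw [L]
  apply mul_lt_mul_of_pos_left _ (by positivity : (0:ℝ) < s/2)
  rw [lt_div_iff₀ hA]
  exact key_main t ht0 ht1

private lemma G_comm (a b : ℝ) : G a b = G b a := by rw [G, G, mul_comm]
private lemma Q_comm (a b : ℝ) : Q a b = Q b a := by rw [Q, Q]; ring_nf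
private lemma M_comm (a b : ℝ) : M a b = M b a := by
  rw [M, M, show b - a = -(a-b) by ring, show b + a = a + b by ring,
    show (-(a-b))/(a+b) = -((a-b)/(a+b)) from neg_div _ _,
    Real.arsinh_neg, mul_neg, div_neg, neg_div, neg_neg]

private lemma part1 (a b : ℝ) (ha : 0 < a) (hb : 0 < b) (hne : a ≠ b) :
    G a b ^ ((1 : ℝ) / 3) * Q a b ^ ((2 : ℝ) / 3) < M a b := by
  rcases lt_or_gt_of_ne hne with h | h
  · rw [G_comm, Q_comm, M_comm]; exact main_lt b a hb ha h
  · exact main_lt a b ha hb h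

private lemma mono_exp {g q : ℝ} (hg : 0 < g) (hgq : g ≤ q) {α β : ℝ} (hab : α ≤ β) :
    g ^ β * q ^ (1-β) ≤ g ^ α * q ^ (1-α) := by
  have hq : 0 < q := lt_of_lt_of_le hg hgq
  have h1 : g ^ β = g ^ α * g ^ (β - α) := by
    rw [← Real.rpow_add hg]; ring_nf
  have h2 : q ^ (1-α) = q ^ (1-β) * q ^ (β - α) := by
    rw [← Real.rpow_add hq]; ring_nf
  have h3 : g ^ (β-α) ≤ q ^ (β-α) := Real.rpow_le_rpow hg.le hgq (by linarith)
  calc g^β * q^(1-β) = (g^α * q^(1-β)) * g^(β-α) := by rw [h1]; ring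
    _ ≤ (g^α * q^(1-β)) * q^(β-α) := by
        apply mul_le_mul_of_nonneg_left h3
        positivity
    _ = g^α * q^(1-α) := by rw [h2]; ring

private lemma G_le_Q (a b : ℝ) (ha : 0 < a) (hb : 0 < b) : G a b ≤ Q a b := by
  rw [G, Q]; exact Real.sqrt_le_sqrt (by nlinarith [sq_nonneg (a-b)])

private lemma G_pos (a b : ℝ) (ha : 0 < a) (hb : 0 < b) : 0 < G a b := by
  rw [G]; positivity

private lemma counterexample (β : ℝ) (hβ1 : (1:ℝ)/4 ≤ β) (hβ2 : β < 1/3) :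
    ∃ a b : ℝ, 0 < a ∧ 0 < b ∧ a ≠ b ∧ ¬ (G a b ^ β * Q a b ^ (1-β) < M a b) := by
  obtain ⟨x, hxdef⟩ : ∃ x : ℝ, x = 1/3 - β := ⟨_, rfl⟩
  have hx0 : 0 < x := by rw [hxdef]; linarith
  have hx12 : x ≤ 1/12 := by rw [hxdef]; linarith
  obtain ⟨t, htdef⟩ : ∃ t : ℝ, t = Real.sqrt x := ⟨_, rfl⟩
  have ht0 : 0 < t := by rw [htdef]; exact Real.sqrt_pos.2 hx0
  have ht2 : t^2 = x := by rw [htdef]; exact Real.sq_sqrt hx0.le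
  have ht1 : t < 1 := by nlinarith [sq_nonneg (t-1)]
  have ha : (0:ℝ) < 1 + t := by linarith
  have hb : (0:ℝ) < 1 - t := by linarith
  have hne : (1:ℝ) + t ≠ 1 - t := by intro h; linarith
  refine ⟨1+t, 1-t, ha, hb, hne, ?_⟩
  intro hβlt
  -- compute the means
  have hGx : G (1+t) (1-t) = Real.sqrt (1-x) := by
    rw [G, show (1+t)*(1-t) = 1 - t^2 by ring, ht2]
  have hQx : Q (1+t) (1-t) = Real.sqrt (1+x) := by
    rw [Q, show ((1+t)^2 + (1-t)^2)/2 = 1 + t^2 by ring, ht2]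
  have hA : 0 < Real.arsinh t := Real.arsinh_pos_iff.2 ht0
  have hMx : M (1+t) (1-t) = t / Real.arsinh t := by
    rw [M, show (1+t) - (1-t) = 2*t by ring, show (1+t) + (1-t) = 2 by ring,
      show 2*t/2 = t by ring, mul_div_mul_left _ _ (two_ne_zero)]
  rw [hGx, hQx, hMx] at hβlt
  -- bound M by 1/(1-x/6)
  have hars : t * (1 - x/6) ≤ Real.arsinh t := by
    have h := arsinh_ge t ht0.le ht1.le
    calc t * (1 - x/6) = t - t^3/6 := by rw [← ht2]; ring
      _ ≤ Real.arsinh t := h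
  have harsp : 0 < t * (1 - x/6) := by
    apply mul_pos ht0; nlinarith
  have hMle : t / Real.arsinh t ≤ 1/(1 - x/6) := by
    calc t / Real.arsinh t ≤ t / (t * (1 - x/6)) :=
          div_le_div_of_nonneg_left ht0.le harsp hars
      _ = 1/(1 - x/6) := by
          rw [div_eq_div_iff (by positivity) (by nlinarith)]
          ring
  have hfinal : Real.sqrt (1-x) ^ β * Real.sqrt (1+x) ^ (1-β) * (1 - x/6) < 1 := by
    have h := lt_of_lt_of_le hβlt hMle
    have h6 : (0:ℝ) < 1 - x/6 := by nlinarith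
    rw [lt_div_iff₀ h6] at h
    exact h
  -- take logs
  have h1x : (0:ℝ) < 1 - x := by linarith
  have h1x' : (0:ℝ) < 1 + x := by linarith
  have hs1 : (0:ℝ) < Real.sqrt (1-x) := Real.sqrt_pos.2 h1x
  have hs2 : (0:ℝ) < Real.sqrt (1+x) := Real.sqrt_pos.2 h1x'
  have h6 : (0:ℝ) < 1 - x/6 := by nlinarith
  have hr1 : (0:ℝ) < Real.sqrt (1-x) ^ β := Real.rpow_pos_of_pos hs1 _
  have hr2 : (0:ℝ) < Real.sqrt (1+x) ^ (1-β) := Real.rpow_pos_of_pos hs2 _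
  have hprodpos : (0:ℝ) < Real.sqrt (1-x) ^ β * Real.sqrt (1+x) ^ (1-β) * (1 - x/6) := by
    positivity
  have hlog := Real.log_neg hprodpos hfinal
  rw [Real.log_mul (by positivity) h6.ne',
    Real.log_mul hr1.ne' hr2.ne',
    Real.log_rpow hs1, Real.log_rpow hs2,
    Real.log_sqrt h1x.le, Real.log_sqrt h1x'.le] at hlog
  have hL1 := log_one_sub_ge x hx0.le (by linarith)
  have hL2 := log_one_add_ge x hx0.le (by linarith)
  have hL3 := log_one_sub_ge (x/6) (by linarith) (by linarith)
  have hm1 : β * (-x - 2*x^2) ≤ β * Real.log (1-x) :=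
    mul_le_mul_of_nonneg_left hL1 (by linarith)
  have hm2 : (1-β) * (x - x^2) ≤ (1-β) * Real.log (1+x) :=
    mul_le_mul_of_nonneg_left hL2 (by linarith)
  have hE : β * (-x - 2*x^2)/2 + (1-β) * (x - x^2)/2 + (-(x/6) - 2*(x/6)^2)
      = x^2 * (4/9 - β/2) := by rw [hxdef]; ring
  have hpoly : 0 < x^2 * (4/9 - β/2) := by
    apply mul_pos (by positivity)
    linarith
  linarith [hm1, hm2, hL3, hlog, hpoly, hE]

theorem stmt2 :
    (∀ a b : ℝ, 0 < a → 0 < b → a ≠ b →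
      G a b ^ ((1 : ℝ) / 3) * Q a b ^ ((2 : ℝ) / 3) < M a b) ∧
    (∀ α : ℝ, (∀ a b : ℝ, 0 < a → 0 < b → a ≠ b →
      G a b ^ α * Q a b ^ (1 - α) < M a b) ↔ 1 / 3 ≤ α) := by
  constructor
  · exact part1
  · intro α
    constructor
    · intro hP
      by_contra hlt
      push_neg at hlt
      obtain ⟨β, hβ1, hβ2, hαβ⟩ : ∃ β : ℝ, 1/4 ≤ β ∧ β < 1/3 ∧ α ≤ β :=
        ⟨max α (1/4), le_max_right _ _, max_lt hlt (by norm_num), le_max_left _ _⟩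
      obtain ⟨a, b, ha, hb, hne, hnot⟩ := counterexample β hβ1 hβ2
      apply hnot
      calc G a b ^ β * Q a b ^ (1-β) ≤ G a b ^ α * Q a b ^ (1-α) :=
            mono_exp (G_pos a b ha hb) (G_le_Q a b ha hb) hαβ
        _ < M a b := hP a b ha hb hne
    · intro hα a b ha hb hne
      have h1 : G a b ^ α * Q a b ^ (1-α) ≤ G a b ^ ((1:ℝ)/3) * Q a b ^ (1 - (1:ℝ)/3) :=
        mono_exp (G_pos a b ha hb) (G_le_Q a b ha hb) hα
      have h2 := part1 a b ha hb hne
      calc G a b ^ α * Q a b ^ (1-α) ≤ G a b ^ ((1:ℝ)/3) * Q a b ^ (1 - (1:ℝ)/3) := h1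
        _ = G a b ^ ((1:ℝ)/3) * Q a b ^ ((2:ℝ)/3) := by norm_num
        _ < M a b := h2
end

section
/- The ratio [3 - cosh(2t)]·[sinh(2t) - 2t] / (8t·sinh²t) is strictly decreasing in t on (0, ∞). -/
open Real Set

private lemma pos_of_deriv_pos (F F' : ℝ → ℝ) (hF : ∀ x, HasDerivAt F (F' x) x)
    (h0 : F 0 = 0) (hpos : ∀ x, 0 < x → 0 < F' x) : ∀ x, 0 < x → 0 < F x := by
  intro x hx
  have hmono : StrictMonoOn F (Ici 0) := by
    apply strictMonoOn_of_deriv_pos (convex_Ici 0)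
    · exact fun y _ => (hF y).continuousAt.continuousWithinAt
    · intro y hy
      rw [interior_Ici] at hy
      rw [(hF y).deriv]
      exact hpos y hy
  have := hmono self_mem_Ici (mem_Ici.mpr hx.le) hx
  linarith [this, h0]

private lemma cosh_lower {x : ℝ} (hx : 0 < x) : 1 + x ^ 2 / 2 < Real.cosh x := by
  have h2 : Real.cosh x = Real.cosh (x / 2) ^ 2 + Real.sinh (x / 2) ^ 2 := by
    rw [← Real.cosh_two_mul]; ring_nf
  have hs : x / 2 < Real.sinh (x / 2) := Real.self_lt_sinh_iff.mpr (by linarith)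
  have hs2 : (x / 2) ^ 2 < Real.sinh (x / 2) ^ 2 := by
    apply pow_lt_pow_left₀ hs (by positivity) two_ne_zero
  have hc2 := Real.cosh_sq (x / 2)
  nlinarith

private lemma q5_pos {x : ℝ} (hx : 0 < x) :
    0 < 16 * Real.cosh (2 * x) - 16 * Real.cosh x - 9 * x * Real.sinh x
      - x ^ 2 * Real.cosh x := by
  have hc2 : Real.cosh (2 * x) = Real.cosh x ^ 2 + Real.sinh x ^ 2 := Real.cosh_two_mul x
  have hsq : Real.sinh x ^ 2 = Real.cosh x ^ 2 - 1 := Real.sinh_sq x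
  have hcl := cosh_lower hx
  have hs : 0 < Real.sinh x := Real.sinh_pos_iff.mpr hx
  nlinarith [sq_nonneg (x - Real.sinh x), Real.one_le_cosh x, mul_pos hx hs, sq_nonneg x]

private lemma q4_pos {x : ℝ} (hx : 0 < x) :
    0 < 8 * Real.sinh (2 * x) - 9 * Real.sinh x - 7 * x * Real.cosh x
      - x ^ 2 * Real.sinh x := by
  refine pos_of_deriv_pos
    (fun y => 8 * Real.sinh (2 * y) - 9 * Real.sinh y - 7 * y * Real.cosh y
      - y ^ 2 * Real.sinh y)
    (fun y => 16 * Real.cosh (2 * y) - 16 * Real.cosh y - 9 * y * Real.sinh y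
      - y ^ 2 * Real.cosh y) (fun y => ?_) (by norm_num) (fun y hy => q5_pos hy) x hx
  have h2 : HasDerivAt (fun z : ℝ => 2 * z) 2 y := by
    simpa using (hasDerivAt_id y).const_mul (2 : ℝ)
  have hs2 : HasDerivAt (fun z => Real.sinh (2 * z)) (Real.cosh (2 * y) * 2) y :=
    (Real.hasDerivAt_sinh (2 * y)).comp y h2
  have hy2 : HasDerivAt (fun z : ℝ => z ^ 2) (2 * y) y := by
    simpa using hasDerivAt_pow 2 y
  have H := (((hs2.const_mul 8).sub ((Real.hasDerivAt_sinh y).const_mul 9)).sub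
      (((hasDerivAt_id y).mul (Real.hasDerivAt_cosh y)).const_mul 7)).sub
      (hy2.mul (Real.hasDerivAt_sinh y))
  convert H using 1
  all_goals try funext z
  all_goals try simp only [id_eq, Pi.mul_apply, Pi.sub_apply, Pi.add_apply]
  all_goals try rfl
  all_goals ring

private lemma q3_pos {x : ℝ} (hx : 0 < x) :
    0 < 4 * Real.cosh (2 * x) - 4 * Real.cosh x - 5 * x * Real.sinh x
      - x ^ 2 * Real.cosh x := by
  refine pos_of_deriv_pos
    (fun y => 4 * Real.cosh (2 * y) - 4 * Real.cosh y - 5 * y * Real.sinh y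
      - y ^ 2 * Real.cosh y)
    (fun y => 8 * Real.sinh (2 * y) - 9 * Real.sinh y - 7 * y * Real.cosh y
      - y ^ 2 * Real.sinh y) (fun y => ?_) (by norm_num) (fun y hy => q4_pos hy) x hx
  have h2 : HasDerivAt (fun z : ℝ => 2 * z) 2 y := by
    simpa using (hasDerivAt_id y).const_mul (2 : ℝ)
  have hc2 : HasDerivAt (fun z => Real.cosh (2 * z)) (Real.sinh (2 * y) * 2) y :=
    (Real.hasDerivAt_cosh (2 * y)).comp y h2
  have hy2 : HasDerivAt (fun z : ℝ => z ^ 2) (2 * y) y := by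
    simpa using hasDerivAt_pow 2 y
  have H := (((hc2.const_mul 4).sub ((Real.hasDerivAt_cosh y).const_mul 4)).sub
      (((hasDerivAt_id y).mul (Real.hasDerivAt_sinh y)).const_mul 5)).sub
      (hy2.mul (Real.hasDerivAt_cosh y))
  convert H using 1
  all_goals try funext z
  all_goals try simp only [id_eq, Pi.mul_apply, Pi.sub_apply, Pi.add_apply]
  all_goals try rfl
  all_goals ring

private lemma q2_pos {x : ℝ} (hx : 0 < x) :
    0 < 2 * Real.sinh (2 * x) - Real.sinh x - 3 * x * Real.cosh x
      - x ^ 2 * Real.sinh x := by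
  refine pos_of_deriv_pos
    (fun y => 2 * Real.sinh (2 * y) - Real.sinh y - 3 * y * Real.cosh y
      - y ^ 2 * Real.sinh y)
    (fun y => 4 * Real.cosh (2 * y) - 4 * Real.cosh y - 5 * y * Real.sinh y
      - y ^ 2 * Real.cosh y) (fun y => ?_) (by norm_num) (fun y hy => q3_pos hy) x hx
  have h2 : HasDerivAt (fun z : ℝ => 2 * z) 2 y := by
    simpa using (hasDerivAt_id y).const_mul (2 : ℝ)
  have hs2 : HasDerivAt (fun z => Real.sinh (2 * z)) (Real.cosh (2 * y) * 2) y :=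
    (Real.hasDerivAt_sinh (2 * y)).comp y h2
  have hy2 : HasDerivAt (fun z : ℝ => z ^ 2) (2 * y) y := by
    simpa using hasDerivAt_pow 2 y
  have H := (((hs2.const_mul 2).sub (Real.hasDerivAt_sinh y)).sub
      (((hasDerivAt_id y).mul (Real.hasDerivAt_cosh y)).const_mul 3)).sub
      (hy2.mul (Real.hasDerivAt_sinh y))
  convert H using 1
  all_goals try funext z
  all_goals try simp only [id_eq, Pi.mul_apply, Pi.sub_apply, Pi.add_apply]
  all_goals try rfl
  all_goals ring

private lemma q1_pos {x : ℝ} (hx : 0 < x) :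
    0 < Real.cosh (2 * x) - 1 - x * Real.sinh x - x ^ 2 * Real.cosh x := by
  refine pos_of_deriv_pos
    (fun y => Real.cosh (2 * y) - 1 - y * Real.sinh y - y ^ 2 * Real.cosh y)
    (fun y => 2 * Real.sinh (2 * y) - Real.sinh y - 3 * y * Real.cosh y
      - y ^ 2 * Real.sinh y) (fun y => ?_) (by norm_num) (fun y hy => q2_pos hy) x hx
  have h2 : HasDerivAt (fun z : ℝ => 2 * z) 2 y := by
    simpa using (hasDerivAt_id y).const_mul (2 : ℝ)
  have hc2 : HasDerivAt (fun z => Real.cosh (2 * z)) (Real.sinh (2 * y) * 2) y :=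
    (Real.hasDerivAt_cosh (2 * y)).comp y h2
  have hy2 : HasDerivAt (fun z : ℝ => z ^ 2) (2 * y) y := by
    simpa using hasDerivAt_pow 2 y
  have H := ((hc2.sub_const 1).sub
      ((hasDerivAt_id y).mul (Real.hasDerivAt_sinh y))).sub
      (hy2.mul (Real.hasDerivAt_cosh y))
  convert H using 1
  all_goals try funext z
  all_goals try simp only [id_eq, Pi.mul_apply, Pi.sub_apply, Pi.add_apply]
  all_goals try rfl
  all_goals ring

private lemma qA {x : ℝ} (hx : 0 < x) :
    x ^ 2 * Real.sinh x < (Real.cosh x - 1) * (Real.sinh x + x) := by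
  have := pos_of_deriv_pos
    (fun y => (Real.cosh y - 1) * (Real.sinh y + y) - y ^ 2 * Real.sinh y)
    (fun y => Real.cosh (2 * y) - 1 - y * Real.sinh y - y ^ 2 * Real.cosh y)
    (fun y => ?_) (by norm_num) (fun y hy => q1_pos hy) x hx
  · change 0 < (Real.cosh x - 1) * (Real.sinh x + x) - x ^ 2 * Real.sinh x at this
    linarith
  have hy2 : HasDerivAt (fun z : ℝ => z ^ 2) (2 * y) y := by
    simpa using hasDerivAt_pow 2 y
  have H := (((Real.hasDerivAt_cosh y).sub_const 1).mul
      ((Real.hasDerivAt_sinh y).add (hasDerivAt_id y))).sub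
      (hy2.mul (Real.hasDerivAt_sinh y))
  convert H using 1
  all_goals try funext z
  all_goals try simp only [id_eq, Pi.mul_apply, Pi.sub_apply, Pi.add_apply]
  all_goals try rfl
  all_goals try rw [Real.cosh_two_mul]
  all_goals ring

private lemma sinh_lt_mul_cosh {x : ℝ} (hx : 0 < x) : Real.sinh x < x * Real.cosh x := by
  have := pos_of_deriv_pos (fun y => y * Real.cosh y - Real.sinh y)
    (fun y => y * Real.sinh y) (fun y => ?_) (by norm_num) (fun y hy =>
      mul_pos hy (Real.sinh_pos_iff.mpr hy)) x hx
  · change 0 < x * Real.cosh x - Real.sinh x at this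
    linarith
  have H := ((hasDerivAt_id y).mul (Real.hasDerivAt_cosh y)).sub (Real.hasDerivAt_sinh y)
  convert H using 1
  all_goals try funext z
  all_goals try simp only [id_eq, Pi.mul_apply, Pi.sub_apply, Pi.add_apply]
  all_goals try rfl
  all_goals ring

private lemma h_anti :
    StrictAntiOn (fun x : ℝ => (Real.sinh x - x) / (x * (Real.cosh x - 1))) (Ioi 0) := by
  have hden : ∀ x : ℝ, 0 < x → x * (Real.cosh x - 1) ≠ 0 := fun x hx =>
    ne_of_gt (mul_pos hx (by linarith [Real.one_lt_cosh.mpr hx.ne']))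
  have hder : ∀ x : ℝ, 0 < x → HasDerivAt
      (fun y : ℝ => (Real.sinh y - y) / (y * (Real.cosh y - 1)))
      (((Real.cosh x - 1) * (x * (Real.cosh x - 1)) -
        (Real.sinh x - x) * (1 * (Real.cosh x - 1) + x * Real.sinh x)) /
        (x * (Real.cosh x - 1)) ^ 2) x := by
    intro x hx
    exact ((Real.hasDerivAt_sinh x).sub (hasDerivAt_id x)).div
      ((hasDerivAt_id x).mul ((Real.hasDerivAt_cosh x).sub_const 1)) (hden x hx)
  apply strictAntiOn_of_deriv_neg (convex_Ioi 0)
  · exact fun y hy => (hder y hy).continuousAt.continuousWithinAt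
  · intro x hx
    rw [interior_Ioi] at hx
    rw [(hder x hx).deriv]
    apply div_neg_of_neg_of_pos
    · have key := qA hx
      have hE : (Real.cosh x - 1) * (x * (Real.cosh x - 1)) -
          (Real.sinh x - x) * (1 * (Real.cosh x - 1) + x * Real.sinh x) =
          x ^ 2 * Real.sinh x - (Real.cosh x - 1) * (Real.sinh x + x) := by
        linear_combination (-x) * Real.sinh_sq x
      rw [hE]
      linarith
    · exact pow_pos (mul_pos hx (by linarith [Real.one_lt_cosh.mpr hx.ne'])) 2

private lemma g2_mono :
    StrictMonoOn (fun x : ℝ => (Real.sinh x - x) / (2 * x)) (Ioi 0) := by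
  have hder : ∀ x : ℝ, 0 < x → HasDerivAt
      (fun y : ℝ => (Real.sinh y - y) / (2 * y))
      (((Real.cosh x - 1) * (2 * x) - (Real.sinh x - x) * 2) / (2 * x) ^ 2) x := by
    intro x hx
    exact ((Real.hasDerivAt_sinh x).sub (hasDerivAt_id x)).div
      (by simpa using (hasDerivAt_id x).const_mul (2 : ℝ)) (by intro h; nlinarith)
  apply strictMonoOn_of_deriv_pos (convex_Ioi 0)
  · exact fun y hy => (hder y hy).continuousAt.continuousWithinAt
  · intro x hx
    rw [interior_Ioi] at hx
    rw [(hder x hx).deriv]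
    apply div_pos
    · have := sinh_lt_mul_cosh hx
      nlinarith
    · have hx0 : (0:ℝ) < x := hx
      positivity

theorem stmt16 :
    StrictAntiOn
      (fun t : ℝ => (3 - Real.cosh (2 * t)) * (Real.sinh (2 * t) - 2 * t) /
        (8 * t * Real.sinh t ^ 2))
      (Set.Ioi 0) := by
  have key : ∀ t : ℝ, 0 < t →
      (3 - Real.cosh (2 * t)) * (Real.sinh (2 * t) - 2 * t) / (8 * t * Real.sinh t ^ 2) =
      (Real.sinh (2 * t) - 2 * t) / ((2 * t) * (Real.cosh (2 * t) - 1)) -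
      (Real.sinh (2 * t) - 2 * t) / (2 * (2 * t)) := by
    intro t ht
    have hst : 0 < Real.sinh t := Real.sinh_pos_iff.mpr ht
    have hts : 0 < t * Real.sinh t ^ 2 := mul_pos ht (pow_pos hst 2)
    have hnum : 3 - Real.cosh (2 * t) = 2 - 2 * Real.sinh t ^ 2 := by
      rw [Real.cosh_two_mul, Real.cosh_sq]; ring
    have hden : (2 * t) * (Real.cosh (2 * t) - 1) = 4 * t * Real.sinh t ^ 2 := by
      rw [Real.cosh_two_mul, Real.cosh_sq]; ring
    have h1 : (4 * t * Real.sinh t ^ 2) ≠ 0 := ne_of_gt (by linarith)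
    have h2 : (2 * (2 * t)) ≠ 0 := ne_of_gt (by linarith)
    have h3 : (8 * t * Real.sinh t ^ 2) ≠ 0 := ne_of_gt (by linarith)
    have h4 : (4 * t * Real.sinh t ^ 2) * (2 * (2 * t)) ≠ 0 :=
      ne_of_gt (mul_pos (by linarith) (by linarith))
    rw [hnum, hden, div_sub_div _ _ h1 h2, div_eq_div_iff h3 h4]
    ring
  intro a ha b hb hab
  rw [mem_Ioi] at ha hb
  have h2a : (2 : ℝ) * a ∈ Ioi (0 : ℝ) := by simp [mem_Ioi]; linarith
  have h2b : (2 : ℝ) * b ∈ Ioi (0 : ℝ) := by simp [mem_Ioi]; linarith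
  have hh := h_anti h2a h2b (by linarith)
  have hg := g2_mono h2a h2b (by linarith)
  simp only []
  rw [key a ha, key b hb]
  simp only [] at hh hg
  linarith
end
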